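/- Let a = (a1,a2) ∈ ℤ² and p ∈ ℝ², and assume that both k ↦ 1/(μ(k)·μ(k+p)) and k ↦ 1/(μ(k)·μ(k−p)) are Lebesgue integrable on [−π,π]². Define I_a(p) := (2π)^{−2} ∫_{[−π,π]²} exp(i(k1·a1 + k2·a2)) / (μ(k)·μ(k+p)) dk. Then conj(I_a(p)) = (−1)^{a1+a2} · I_a(−p). -/

import Mathlib

open Complex Real MeasureTheory ComplexConjugate

/-- The characteristic polynomial of the non-interacting dimer model. -/
noncomputable def mu (t1 t2 t3 : ℝ) (k : ℝ × ℝ) : ℂ :=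
  (t1 : ℂ) + Complex.I * (t2 : ℂ) * Complex.exp (Complex.I * (k.1 : ℂ))
    - (t3 : ℂ) * Complex.exp (Complex.I * ((k.1 : ℂ) + (k.2 : ℂ)))
    - Complex.I * Complex.exp (Complex.I * (k.2 : ℂ))

/-- `I_a(p) = (2π)⁻² ∫_{[−π,π]²} e^{i k·a}/(μ(k) μ(k+p)) dk`. -/
noncomputable def Ia (t1 t2 t3 : ℝ) (a : ℤ × ℤ) (p : ℝ × ℝ) : ℂ :=
  (((2 * π) ^ 2 : ℝ) : ℂ)⁻¹ *
    ∫ k in Set.Icc (-π) π ×ˢ Set.Icc (-π) π,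
      Complex.exp (Complex.I * ((k.1 : ℂ) * (a.1 : ℂ) + (k.2 : ℂ) * (a.2 : ℂ)))
        / (mu t1 t2 t3 k * mu t1 t2 t3 (k + p))

private lemma exp_period' (z : ℂ) : Complex.exp (z + 2 * ↑π * Complex.I) = Complex.exp z := by
  rw [Complex.exp_add, Complex.exp_two_pi_mul_I, mul_one]

/-- μ shifted by (2π, 0). -/
private lemma mu_shift1 (t1 t2 t3 : ℝ) (k : ℝ × ℝ) :
    mu t1 t2 t3 (k + ((2 * π : ℝ), (0 : ℝ))) = mu t1 t2 t3 k := by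
  have h1 : Complex.I * ((↑(k.1 + 2 * π) : ℂ)) = Complex.I * (k.1 : ℂ) + 2 * ↑π * Complex.I := by
    push_cast; ring
  have h2 : Complex.I * ((↑(k.1 + 2 * π) : ℂ) + (k.2 : ℂ))
      = Complex.I * ((k.1 : ℂ) + (k.2 : ℂ)) + 2 * ↑π * Complex.I := by
    push_cast; ring
  show mu t1 t2 t3 (k.1 + 2 * π, k.2 + 0) = mu t1 t2 t3 k
  unfold mu
  simp only [add_zero]
  rw [h1, h2, exp_period', exp_period']

/-- μ shifted by (0, 2π). -/
private lemma mu_shift2 (t1 t2 t3 : ℝ) (k : ℝ × ℝ) :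
    mu t1 t2 t3 (k + ((0 : ℝ), (2 * π : ℝ))) = mu t1 t2 t3 k := by
  have h1 : Complex.I * ((↑(k.2 + 2 * π) : ℂ)) = Complex.I * (k.2 : ℂ) + 2 * ↑π * Complex.I := by
    push_cast; ring
  have h2 : Complex.I * ((k.1 : ℂ) + (↑(k.2 + 2 * π) : ℂ))
      = Complex.I * ((k.1 : ℂ) + (k.2 : ℂ)) + 2 * ↑π * Complex.I := by
    push_cast; ring
  show mu t1 t2 t3 (k.1 + 0, k.2 + 2 * π) = mu t1 t2 t3 k
  unfold mu
  simp only [add_zero]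
  rw [h1, h2, exp_period', exp_period']

/-- Conjugation of μ. -/
private lemma mu_conj (t1 t2 t3 : ℝ) (k : ℝ × ℝ) :
    (starRingEnd ℂ) (mu t1 t2 t3 k) = mu t1 t2 t3 (((π, π) : ℝ × ℝ) - k) := by
  have c1 : ∀ x : ℝ, (starRingEnd ℂ) (Complex.exp (Complex.I * (x : ℂ)))
      = Complex.exp (-(Complex.I * (x : ℂ))) := by
    intro x
    rw [← Complex.exp_conj]
    congr 1
    simp [Complex.conj_ofReal]
  have c2 : ∀ x y : ℝ, (starRingEnd ℂ) (Complex.exp (Complex.I * ((x : ℂ) + (y : ℂ))))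
      = Complex.exp (-(Complex.I * ((x : ℂ) + (y : ℂ)))) := by
    intro x y
    rw [← Complex.exp_conj]
    congr 1
    simp [Complex.conj_ofReal]
  have e1 : Complex.exp (Complex.I * ((↑(π - k.1) : ℂ)))
      = -Complex.exp (-(Complex.I * (k.1 : ℂ))) := by
    rw [show Complex.I * ((↑(π - k.1) : ℂ)) = ↑π * Complex.I + -(Complex.I * (k.1 : ℂ)) by
      push_cast; ring, Complex.exp_add, Complex.exp_pi_mul_I]
    ring
  have e2 : Complex.exp (Complex.I * ((↑(π - k.1) : ℂ) + (↑(π - k.2) : ℂ)))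
      = Complex.exp (-(Complex.I * ((k.1 : ℂ) + (k.2 : ℂ)))) := by
    rw [show Complex.I * ((↑(π - k.1) : ℂ) + (↑(π - k.2) : ℂ))
        = -(Complex.I * ((k.1 : ℂ) + (k.2 : ℂ))) + 2 * ↑π * Complex.I by push_cast; ring,
      exp_period']
  have e3 : Complex.exp (Complex.I * ((↑(π - k.2) : ℂ)))
      = -Complex.exp (-(Complex.I * (k.2 : ℂ))) := by
    rw [show Complex.I * ((↑(π - k.2) : ℂ)) = ↑π * Complex.I + -(Complex.I * (k.2 : ℂ)) by
      push_cast; ring, Complex.exp_add, Complex.exp_pi_mul_I]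
    ring
  show _ = mu t1 t2 t3 (π - k.1, π - k.2)
  unfold mu
  simp only [map_sub, map_add, map_mul, Complex.conj_ofReal, Complex.conj_I, c1, c2]
  rw [e1, e2, e3]
  ring

/-- translation invariance of set integrals for periodic functions. -/
private lemma integral_shift_eq (F : ℝ × ℝ → ℂ) (v : ℝ × ℝ) (hper : ∀ k, F (k + v) = F k)
    (A : Set (ℝ × ℝ)) :
    ∫ k in (fun k => k + v) '' A, F k = ∫ k in A, F k := by
  rw [(measurePreserving_add_right volume v).setIntegral_image_emb
    (measurableEmbedding_addRight v) F A]
  simp only [hper]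

private lemma integrableOn_shift (F : ℝ × ℝ → ℂ) (v : ℝ × ℝ) (hper : ∀ k, F (k + v) = F k)
    {A : Set (ℝ × ℝ)} (h : IntegrableOn F A) :
    IntegrableOn F ((fun k => k + v) '' A) := by
  rw [← (measurePreserving_add_right (volume : Measure (ℝ × ℝ)) v).integrableOn_comp_preimage
    (measurableEmbedding_addRight v)]
  rw [(add_left_injective v).preimage_image]
  simpa [Function.comp_def, hper] using h

private lemma null_vert (c : ℝ) (B : Set ℝ) : (volume : Measure (ℝ × ℝ)) ({c} ×ˢ B) = 0 := by
  rw [Measure.volume_eq_prod, Measure.prod_prod]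
  simp

private lemma null_horiz (c : ℝ) (B : Set ℝ) : (volume : Measure (ℝ × ℝ)) (B ×ˢ {c}) = 0 := by
  rw [Measure.volume_eq_prod, Measure.prod_prod]
  simp

example : True := trivial

private lemma step_shift_y (F : ℝ × ℝ → ℂ) (hper : ∀ k, F (k + ((0:ℝ), (2*π:ℝ))) = F k)
    (A : Set ℝ) (hA : MeasurableSet A)
    (h : IntegrableOn F (A ×ˢ Set.Icc (-π) π)) :
    IntegrableOn F (A ×ˢ Set.Icc (0:ℝ) (2*π)) ∧
      ∫ k in A ×ˢ Set.Icc (0:ℝ) (2*π), F k = ∫ k in A ×ˢ Set.Icc (-π) π, F k := by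
  have hπ : (0:ℝ) ≤ π := le_of_lt Real.pi_pos
  have hπ2 : π ≤ 2*π := by nlinarith [Real.pi_pos]
  have hmπ : -π ≤ (0:ℝ) := by linarith
  have himg : (fun k : ℝ × ℝ => k + ((0:ℝ), (2*π:ℝ))) '' (A ×ˢ Set.Icc (-π) (0:ℝ))
      = A ×ˢ Set.Icc π (2*π) := by
    have himg' : ((fun x : ℝ => x + (0:ℝ)) '' A) ×ˢ
        ((fun y : ℝ => y + 2*π) '' Set.Icc (-π) (0:ℝ))
        = (fun k : ℝ × ℝ => k + ((0:ℝ), (2*π:ℝ))) '' (A ×ˢ Set.Icc (-π) (0:ℝ)) :=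
      Set.prod_image_image_eq
    rw [← himg', Set.image_add_const_Icc, show -π + 2*π = π by ring, zero_add]
    congr 1
    simp
  have h0 : IntegrableOn F (A ×ˢ Set.Icc (0:ℝ) π) :=
    h.mono_set (Set.prod_mono_right (Set.Icc_subset_Icc hmπ le_rfl))
  have hm : IntegrableOn F (A ×ˢ Set.Icc (-π) (0:ℝ)) :=
    h.mono_set (Set.prod_mono_right (Set.Icc_subset_Icc le_rfl hπ))
  have hp : IntegrableOn F (A ×ˢ Set.Icc π (2*π)) :=
    himg ▸ integrableOn_shift F _ hper hm
  have hpint : ∫ k in A ×ˢ Set.Icc π (2*π), F k = ∫ k in A ×ˢ Set.Icc (-π) (0:ℝ), F k := by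
    rw [← himg, integral_shift_eq F _ hper]
  have hsplit : A ×ˢ Set.Icc (0:ℝ) (2*π) = A ×ˢ Set.Icc (0:ℝ) π ∪ A ×ˢ Set.Icc π (2*π) := by
    rw [← Set.prod_union, Set.Icc_union_Icc_eq_Icc hπ hπ2]
  have hsplit' : A ×ˢ Set.Icc (-π) π = A ×ˢ Set.Icc (-π) (0:ℝ) ∪ A ×ˢ Set.Icc (0:ℝ) π := by
    rw [← Set.prod_union, Set.Icc_union_Icc_eq_Icc hmπ hπ]
  have hd : AEDisjoint volume (A ×ˢ Set.Icc (0:ℝ) π) (A ×ˢ Set.Icc π (2*π)) := by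
    show (volume : Measure (ℝ × ℝ)) _ = 0
    rw [Set.prod_inter_prod, Set.Icc_inter_Icc, Set.inter_self,
      show (0:ℝ) ⊔ π = π by simp [hπ], show π ⊓ (2*π) = π by simp [hπ2], Set.Icc_self]
    exact measure_mono_null (Set.prod_mono_left (Set.subset_univ A)) (null_horiz π Set.univ)
  have hd' : AEDisjoint volume (A ×ˢ Set.Icc (-π) (0:ℝ)) (A ×ˢ Set.Icc (0:ℝ) π) := by
    show (volume : Measure (ℝ × ℝ)) _ = 0
    rw [Set.prod_inter_prod, Set.Icc_inter_Icc, Set.inter_self,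
      show -π ⊔ (0:ℝ) = 0 by simp [hmπ], show (0:ℝ) ⊓ π = 0 by simp [hπ], Set.Icc_self]
    exact measure_mono_null (Set.prod_mono_left (Set.subset_univ A)) (null_horiz 0 Set.univ)
  constructor
  · rw [hsplit]; exact h0.union hp
  · rw [hsplit, integral_union_ae hd (hA.prod measurableSet_Icc).nullMeasurableSet h0 hp,
      hpint, hsplit', integral_union_ae hd' (hA.prod measurableSet_Icc).nullMeasurableSet hm h0]
    ring

private lemma step_shift_x (F : ℝ × ℝ → ℂ) (hper : ∀ k, F (k + ((2*π:ℝ), (0:ℝ))) = F k)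
    (B : Set ℝ) (hB : MeasurableSet B)
    (h : IntegrableOn F (Set.Icc (-π) π ×ˢ B)) :
    IntegrableOn F (Set.Icc (0:ℝ) (2*π) ×ˢ B) ∧
      ∫ k in Set.Icc (0:ℝ) (2*π) ×ˢ B, F k = ∫ k in Set.Icc (-π) π ×ˢ B, F k := by
  have hπ : (0:ℝ) ≤ π := le_of_lt Real.pi_pos
  have hπ2 : π ≤ 2*π := by nlinarith [Real.pi_pos]
  have hmπ : -π ≤ (0:ℝ) := by linarith
  have himg : (fun k : ℝ × ℝ => k + ((2*π:ℝ), (0:ℝ))) '' (Set.Icc (-π) (0:ℝ) ×ˢ B)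
      = Set.Icc π (2*π) ×ˢ B := by
    have himg' : ((fun x : ℝ => x + (2*π:ℝ)) '' Set.Icc (-π) (0:ℝ)) ×ˢ
        ((fun y : ℝ => y + (0:ℝ)) '' B)
        = (fun k : ℝ × ℝ => k + ((2*π:ℝ), (0:ℝ))) '' (Set.Icc (-π) (0:ℝ) ×ˢ B) :=
      Set.prod_image_image_eq
    rw [← himg', Set.image_add_const_Icc, show -π + 2*π = π by ring, zero_add]
    congr 1
    simp
  have h0 : IntegrableOn F (Set.Icc (0:ℝ) π ×ˢ B) :=
    h.mono_set (Set.prod_mono_left (Set.Icc_subset_Icc hmπ le_rfl))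
  have hm : IntegrableOn F (Set.Icc (-π) (0:ℝ) ×ˢ B) :=
    h.mono_set (Set.prod_mono_left (Set.Icc_subset_Icc le_rfl hπ))
  have hp : IntegrableOn F (Set.Icc π (2*π) ×ˢ B) :=
    himg ▸ integrableOn_shift F _ hper hm
  have hpint : ∫ k in Set.Icc π (2*π) ×ˢ B, F k = ∫ k in Set.Icc (-π) (0:ℝ) ×ˢ B, F k := by
    rw [← himg, integral_shift_eq F _ hper]
  have hsplit : Set.Icc (0:ℝ) (2*π) ×ˢ B = Set.Icc (0:ℝ) π ×ˢ B ∪ Set.Icc π (2*π) ×ˢ B := by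
    rw [← Set.union_prod, Set.Icc_union_Icc_eq_Icc hπ hπ2]
  have hsplit' : Set.Icc (-π) π ×ˢ B = Set.Icc (-π) (0:ℝ) ×ˢ B ∪ Set.Icc (0:ℝ) π ×ˢ B := by
    rw [← Set.union_prod, Set.Icc_union_Icc_eq_Icc hmπ hπ]
  have hd : AEDisjoint volume (Set.Icc (0:ℝ) π ×ˢ B) (Set.Icc π (2*π) ×ˢ B) := by
    show (volume : Measure (ℝ × ℝ)) _ = 0
    rw [Set.prod_inter_prod, Set.Icc_inter_Icc, Set.inter_self,
      show (0:ℝ) ⊔ π = π by simp [hπ], show π ⊓ (2*π) = π by simp [hπ2], Set.Icc_self]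
    exact measure_mono_null (Set.prod_mono_right (Set.subset_univ B)) (null_vert π Set.univ)
  have hd' : AEDisjoint volume (Set.Icc (-π) (0:ℝ) ×ˢ B) (Set.Icc (0:ℝ) π ×ˢ B) := by
    show (volume : Measure (ℝ × ℝ)) _ = 0
    rw [Set.prod_inter_prod, Set.Icc_inter_Icc, Set.inter_self,
      show -π ⊔ (0:ℝ) = 0 by simp [hmπ], show (0:ℝ) ⊓ π = 0 by simp [hπ], Set.Icc_self]
    exact measure_mono_null (Set.prod_mono_right (Set.subset_univ B)) (null_vert 0 Set.univ)
  constructor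
  · rw [hsplit]; exact h0.union hp
  · rw [hsplit, integral_union_ae hd (measurableSet_Icc.prod hB).nullMeasurableSet h0 hp,
      hpint, hsplit', integral_union_ae hd' (measurableSet_Icc.prod hB).nullMeasurableSet hm h0]
    ring

/-- Conjugation symmetry `conj (I_a(p)) = (−1)^{a₁+a₂} I_a(−p)`. -/
theorem Ia_conj_symmetry (t1 t2 t3 : ℝ) (ht1 : 0 < t1) (ht2 : 0 < t2) (ht3 : 0 < t3)
    (a : ℤ × ℤ) (p : ℝ × ℝ)
    (hint : IntegrableOn (fun k : ℝ × ℝ => (mu t1 t2 t3 k * mu t1 t2 t3 (k + p))⁻¹)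
      (Set.Icc (-π) π ×ˢ Set.Icc (-π) π))
    (hint' : IntegrableOn (fun k : ℝ × ℝ => (mu t1 t2 t3 k * mu t1 t2 t3 (k - p))⁻¹)
      (Set.Icc (-π) π ×ˢ Set.Icc (-π) π)) :
    conj (Ia t1 t2 t3 a p) = (-1 : ℂ) ^ (a.1 + a.2) * Ia t1 t2 t3 a (-p) := by
  set w : ℂ := (-1 : ℂ) ^ (a.1 + a.2) with hw_def
  set F : ℝ × ℝ → ℂ := fun k =>
    Complex.exp (Complex.I * ((k.1 : ℂ) * (a.1 : ℂ) + (k.2 : ℂ) * (a.2 : ℂ)))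
      / (mu t1 t2 t3 k * mu t1 t2 t3 (k - p)) with hF
  -- integrability of F on the square
  have hFint : IntegrableOn F (Set.Icc (-π) π ×ˢ Set.Icc (-π) π) := by
    have heq : F = fun k => Complex.exp (Complex.I * ((k.1:ℂ)*(a.1:ℂ) + (k.2:ℂ)*(a.2:ℂ)))
        * (mu t1 t2 t3 k * mu t1 t2 t3 (k - p))⁻¹ := by
      funext k; rw [hF]; simp only [div_eq_mul_inv]
    rw [heq]
    refine hint'.bdd_mul (c := 1) ?_ (Filter.Eventually.of_forall fun k => ?_)
    · apply Continuous.aestronglyMeasurable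
      fun_prop
    · rw [Complex.norm_exp]
      simp [Complex.mul_re]
  -- periodicity in the first variable
  have hper1 : ∀ k : ℝ × ℝ, F (k + ((2*π:ℝ), (0:ℝ))) = F k := by
    intro k
    have hsub : k + ((2*π:ℝ), (0:ℝ)) - p = (k - p) + ((2*π:ℝ), (0:ℝ)) := by abel
    have hnum : Complex.exp (Complex.I * ((↑((k + ((2*π:ℝ), (0:ℝ))).1) : ℂ) * (a.1:ℂ)
        + (↑((k + ((2*π:ℝ), (0:ℝ))).2) : ℂ) * (a.2:ℂ)))
        = Complex.exp (Complex.I * ((k.1:ℂ) * (a.1:ℂ) + (k.2:ℂ) * (a.2:ℂ))) := by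
      have harg : Complex.I * ((↑(k.1 + 2*π):ℂ) * (a.1:ℂ) + (↑(k.2 + 0):ℂ) * (a.2:ℂ))
          = Complex.I * ((k.1:ℂ) * (a.1:ℂ) + (k.2:ℂ) * (a.2:ℂ))
            + (a.1 : ℂ) * (2 * (π:ℂ) * Complex.I) := by
        push_cast; ring
      show Complex.exp (Complex.I * ((↑(k.1 + 2*π):ℂ) * (a.1:ℂ) + (↑(k.2 + 0):ℂ) * (a.2:ℂ))) = _
      rw [harg, Complex.exp_add, Complex.exp_int_mul_two_pi_mul_I, mul_one]
    rw [hF]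
    simp only
    rw [hnum, mu_shift1, hsub, mu_shift1]
  -- periodicity in the second variable
  have hper2 : ∀ k : ℝ × ℝ, F (k + ((0:ℝ), (2*π:ℝ))) = F k := by
    intro k
    have hsub : k + ((0:ℝ), (2*π:ℝ)) - p = (k - p) + ((0:ℝ), (2*π:ℝ)) := by abel
    have hnum : Complex.exp (Complex.I * ((↑((k + ((0:ℝ), (2*π:ℝ))).1) : ℂ) * (a.1:ℂ)
        + (↑((k + ((0:ℝ), (2*π:ℝ))).2) : ℂ) * (a.2:ℂ)))
        = Complex.exp (Complex.I * ((k.1:ℂ) * (a.1:ℂ) + (k.2:ℂ) * (a.2:ℂ))) := by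
      have harg : Complex.I * ((↑(k.1 + 0):ℂ) * (a.1:ℂ) + (↑(k.2 + 2*π):ℂ) * (a.2:ℂ))
          = Complex.I * ((k.1:ℂ) * (a.1:ℂ) + (k.2:ℂ) * (a.2:ℂ))
            + (a.2 : ℂ) * (2 * (π:ℂ) * Complex.I) := by
        push_cast; ring
      show Complex.exp (Complex.I * ((↑(k.1 + 0):ℂ) * (a.1:ℂ) + (↑(k.2 + 2*π):ℂ) * (a.2:ℂ))) = _
      rw [harg, Complex.exp_add, Complex.exp_int_mul_two_pi_mul_I, mul_one]
    rw [hF]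
    simp only
    rw [hnum, mu_shift2, hsub, mu_shift2]
  -- pointwise conjugation identity
  have hpt : ∀ k : ℝ × ℝ, (starRingEnd ℂ)
      (Complex.exp (Complex.I * ((k.1:ℂ) * (a.1:ℂ) + (k.2:ℂ) * (a.2:ℂ)))
        / (mu t1 t2 t3 k * mu t1 t2 t3 (k + p)))
      = w * F (((π, π) : ℝ × ℝ) - k) := by
    intro k
    have hcnum : (starRingEnd ℂ)
        (Complex.exp (Complex.I * ((k.1:ℂ) * (a.1:ℂ) + (k.2:ℂ) * (a.2:ℂ))))
        = Complex.exp (-(Complex.I * ((k.1:ℂ) * (a.1:ℂ) + (k.2:ℂ) * (a.2:ℂ)))) := by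
      rw [← Complex.exp_conj]
      congr 1
      simp [map_add, map_mul, Complex.conj_ofReal, Complex.conj_I]
    rw [map_div₀, map_mul, mu_conj, mu_conj,
      show ((π, π) : ℝ × ℝ) - (k + p) = (((π, π) : ℝ × ℝ) - k) - p by abel, hcnum, hF]
    simp only
    rw [← mul_div_assoc]
    congr 1
    have hw : w = Complex.exp (((a.1 + a.2 : ℤ) : ℂ) * ((π:ℂ) * Complex.I)) := by
      rw [Complex.exp_int_mul, Complex.exp_pi_mul_I, hw_def]
    have harg : ((a.1 + a.2 : ℤ) : ℂ) * ((π:ℂ) * Complex.I)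
        + Complex.I * ((↑(π - k.1):ℂ) * (a.1:ℂ) + (↑(π - k.2):ℂ) * (a.2:ℂ))
        = -(Complex.I * ((k.1:ℂ) * (a.1:ℂ) + (k.2:ℂ) * (a.2:ℂ)))
          + ((a.1 + a.2 : ℤ) : ℂ) * (2 * (π:ℂ) * Complex.I) := by
      push_cast; ring
    show Complex.exp (-(Complex.I * ((k.1:ℂ) * (a.1:ℂ) + (k.2:ℂ) * (a.2:ℂ))))
        = w * Complex.exp (Complex.I * ((↑(π - k.1):ℂ) * (a.1:ℂ) + (↑(π - k.2):ℂ) * (a.2:ℂ)))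
    rw [hw, ← Complex.exp_add, harg, Complex.exp_add, Complex.exp_int_mul_two_pi_mul_I, mul_one]
  -- image of the square under reflection
  have himgT : (fun k : ℝ × ℝ => ((π, π) : ℝ × ℝ) - k) '' (Set.Icc (-π) π ×ˢ Set.Icc (-π) π)
      = Set.Icc (0:ℝ) (2*π) ×ˢ Set.Icc (0:ℝ) (2*π) := by
    have h' : ((fun x : ℝ => π - x) '' Set.Icc (-π) π) ×ˢ ((fun y : ℝ => π - y) '' Set.Icc (-π) π)
        = (fun k : ℝ × ℝ => ((π, π) : ℝ × ℝ) - k) '' (Set.Icc (-π) π ×ˢ Set.Icc (-π) π) :=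
      Set.prod_image_image_eq
    rw [← h', Set.image_const_sub_Icc, sub_self, sub_neg_eq_add, ← two_mul]
  have hTint : ∫ k in Set.Icc (-π) π ×ˢ Set.Icc (-π) π, F (((π, π) : ℝ × ℝ) - k)
      = ∫ k in Set.Icc (0:ℝ) (2*π) ×ˢ Set.Icc (0:ℝ) (2*π), F k := by
    rw [← himgT, (Measure.measurePreserving_sub_left volume ((π, π) : ℝ × ℝ)).setIntegral_image_emb
      (MeasurableEquiv.subLeft ((π, π) : ℝ × ℝ)).measurableEmbedding F _]
  have hstep1 := step_shift_y F hper2 (Set.Icc (-π) π) measurableSet_Icc hFint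
  have hstep2 := step_shift_x F hper1 (Set.Icc (0:ℝ) (2*π)) measurableSet_Icc hstep1.1
  have hIa' : Ia t1 t2 t3 a (-p) = (((2 * π) ^ 2 : ℝ) : ℂ)⁻¹ *
      ∫ k in Set.Icc (-π) π ×ˢ Set.Icc (-π) π, F k := by
    simp only [Ia, hF, sub_eq_add_neg]
  calc conj (Ia t1 t2 t3 a p)
      = (((2 * π) ^ 2 : ℝ) : ℂ)⁻¹ *
        ∫ k in Set.Icc (-π) π ×ˢ Set.Icc (-π) π, (starRingEnd ℂ)
          (Complex.exp (Complex.I * ((k.1:ℂ) * (a.1:ℂ) + (k.2:ℂ) * (a.2:ℂ)))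
            / (mu t1 t2 t3 k * mu t1 t2 t3 (k + p))) := by
        simp only [Ia, map_mul, map_inv₀, Complex.conj_ofReal, integral_conj]
    _ = (((2 * π) ^ 2 : ℝ) : ℂ)⁻¹ *
        ∫ k in Set.Icc (-π) π ×ˢ Set.Icc (-π) π, w * F (((π, π) : ℝ × ℝ) - k) := by
        simp only [hpt]
    _ = (((2 * π) ^ 2 : ℝ) : ℂ)⁻¹ * (w *
        ∫ k in Set.Icc (-π) π ×ˢ Set.Icc (-π) π, F (((π, π) : ℝ × ℝ) - k)) := by
        rw [integral_const_mul]
    _ = (((2 * π) ^ 2 : ℝ) : ℂ)⁻¹ * (w *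
        ∫ k in Set.Icc (-π) π ×ˢ Set.Icc (-π) π, F k) := by
        rw [hTint, hstep2.2, hstep1.2]
    _ = w * Ia t1 t2 t3 a (-p) := by
        rw [hIa']; ring
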